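/- Let σ₀ be the substitution fixing each p ∈ P, mapping each p' ∈ P' to ⟨π₁(p')^{∩id}⟩T, and mapping each a' ∈ A' to π₂(a')^{∩i̅d} (with P', A' disjoint copies of A and bijections π₁ : P' → A, π₂ : A' → A). For every PDL⁻ formula φ over term variables A' and formula variables P ⊔ P': if φ is derivable in the Hilbert system H⁻ for PDL⁻, then the PDL_REwLA+ formula σ₀(φ) is derivable in the Hilbert system H for PDL_REwLA+. -/

import Mathlib

/-! Statement 8: if a PDL⁻ formula `φ` is derivable in `H⁻`, then `σ₀(φ)` is
derivable in the Hilbert system `H` for PDL_REwLA+. -/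

/-- A generalized structure over term variables `A` and formula variables `P`,
with universe `W`. -/
structure GStruct (A P W : Type) where
  U : W → W → Prop
  rel : A → W → W → Prop
  rel_sub : ∀ a x y, rel a x y → U x y
  val : P → W → Prop

/-- The universal relation is a finite linear order (on a nonempty finite universe). -/
def FinLin {A P W : Type} (S : GStruct A P W) : Prop :=
  Nonempty W ∧ Finite W ∧ (∀ x, S.U x x) ∧
    (∀ x y z, S.U x y → S.U y z → S.U x z) ∧
    (∀ x y, S.U x y → S.U y x → x = y) ∧ (∀ x y, S.U x y ∨ S.U y x)

/-- The universal relation is a finite strict linear order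
(on a nonempty finite universe). -/
def SFinLin {A P W : Type} (S : GStruct A P W) : Prop :=
  Nonempty W ∧ Finite W ∧ (∀ x, ¬ S.U x x) ∧
    (∀ x y z, S.U x y → S.U y z → S.U x z) ∧
    (∀ x y, x ≠ y → S.U x y ∨ S.U y x)
mutual
  /-- Formulas of PDL for REwLA+. -/
  inductive Fml (A P : Type) : Type where
    | pv : P → Fml A P
    | imp : Fml A P → Fml A P → Fml A P
    | fls : Fml A P
    | box : Trm A P → Fml A P → Fml A P
  /-- Terms of PDL for REwLA+. -/
  inductive Trm (A P : Type) : Type where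
    | tv : A → Trm A P
    | comp : Trm A P → Trm A P → Trm A P
    | union : Trm A P → Trm A P → Trm A P
    | plus : Trm A P → Trm A P
    | adom : Trm A P → Trm A P
    | capId : Trm A P → Trm A P
    | capNid : Trm A P → Trm A P
    | test : Fml A P → Trm A P
end

namespace Fml
/-- ¬φ := φ → F -/
def neg {A P : Type} (φ : Fml A P) : Fml A P := .imp φ .fls
/-- T := ¬F -/
def tru {A P : Type} : Fml A P := neg .fls
/-- φ ∨ ψ := ¬φ → ψ -/
def or {A P : Type} (φ ψ : Fml A P) : Fml A P := .imp (neg φ) ψ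
/-- φ ∧ ψ := ¬(¬φ ∨ ¬ψ) -/
def and {A P : Type} (φ ψ : Fml A P) : Fml A P := neg (or (neg φ) (neg ψ))
/-- φ ↔ ψ := (φ → ψ) ∧ (ψ → φ) -/
def iff {A P : Type} (φ ψ : Fml A P) : Fml A P := and (.imp φ ψ) (.imp ψ φ)
/-- ⟨e⟩φ := ¬[e]¬φ -/
def dia {A P : Type} (e : Trm A P) (φ : Fml A P) : Fml A P := neg (.box e (neg φ))
end Fml

mutual
  /-- Semantics of PDL_REwLA+ formulas on a generalized structure. -/
  def semF {A P W : Type} (S : GStruct A P W) : Fml A P → W → Prop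
    | .pv p, x => S.val p x
    | .imp φ ψ, x => semF S φ x → semF S ψ x
    | .fls, _ => False
    | .box e φ, x => ∀ y, semT S e x y → semF S φ y
  /-- Semantics of PDL_REwLA+ terms on a generalized structure. -/
  def semT {A P W : Type} (S : GStruct A P W) : Trm A P → W → W → Prop
    | .tv a, x, y => S.rel a x y
    | .comp e f, x, z => ∃ y, semT S e x y ∧ semT S f y z
    | .union e f, x, y => semT S e x y ∨ semT S f x y
    | .plus e, x, y => Relation.TransGen (fun u v => semT S e u v) x y
    | .adom e, x, y => x = y ∧ ∀ z, ¬ semT S e x z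
    | .capId e, x, y => semT S e x y ∧ x = y
    | .capNid e, x, y => semT S e x y ∧ x ≠ y
    | .test φ, x, y => x = y ∧ semF S φ x
end
mutual
  /-- Formulas of (pure) PDL with tests. -/
  inductive PFml (VA VP : Type) : Type where
    | pv : VP → PFml VA VP
    | imp : PFml VA VP → PFml VA VP → PFml VA VP
    | fls : PFml VA VP
    | box : PTrm VA VP → PFml VA VP → PFml VA VP
  /-- Terms of (pure) PDL with tests. -/
  inductive PTrm (VA VP : Type) : Type where
    | tv : VA → PTrm VA VP
    | comp : PTrm VA VP → PTrm VA VP → PTrm VA VP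
    | union : PTrm VA VP → PTrm VA VP → PTrm VA VP
    | plus : PTrm VA VP → PTrm VA VP
    | test : PFml VA VP → PTrm VA VP
end

mutual
  /-- Semantics of PDL formulas on a generalized structure. -/
  def psemF {VA VP W : Type} (S : GStruct VA VP W) : PFml VA VP → W → Prop
    | .pv p, x => S.val p x
    | .imp φ ψ, x => psemF S φ x → psemF S ψ x
    | .fls, _ => False
    | .box e φ, x => ∀ y, psemT S e x y → psemF S φ y
  /-- Semantics of PDL terms on a generalized structure. -/
  def psemT {VA VP W : Type} (S : GStruct VA VP W) : PTrm VA VP → W → W → Prop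
    | .tv a, x, y => S.rel a x y
    | .comp e f, x, z => ∃ y, psemT S e x y ∧ psemT S f y z
    | .union e f, x, y => psemT S e x y ∨ psemT S f x y
    | .plus e, x, y => Relation.TransGen (fun u v => psemT S e u v) x y
    | .test φ, x, y => x = y ∧ psemF S φ x
end

/-- Validity of a PDL formula on all structures (those with `U = W × W`). -/
def PValidREL {VA VP : Type} (φ : PFml VA VP) : Prop :=
  ∀ (W : Type) (S : GStruct VA VP W), Nonempty W → (∀ x y, S.U x y) →
    ∀ x, psemF S φ x

mutual
  /-- Substitution instance of a PDL formula, substituting PDL_REwLA+ terms for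
  term variables and PDL_REwLA+ formulas for formula variables. -/
  def instF {VA VP A P : Type} (σt : VA → Trm A P) (σf : VP → Fml A P) :
      PFml VA VP → Fml A P
    | .pv p => σf p
    | .imp φ ψ => .imp (instF σt σf φ) (instF σt σf ψ)
    | .fls => .fls
    | .box e φ => .box (instT σt σf e) (instF σt σf φ)
  /-- Substitution instance of a PDL term. -/
  def instT {VA VP A P : Type} (σt : VA → Trm A P) (σf : VP → Fml A P) :
      PTrm VA VP → Trm A P
    | .tv a => σt a
    | .comp e f => .comp (instT σt σf e) (instT σt σf f)
    | .union e f => .union (instT σt σf e) (instT σt σf f)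
    | .plus e => .plus (instT σt σf e)
    | .test φ => .test (instF σt σf φ)
end
/-- The Hilbert system `H` for PDL_REwLA+ on finite linear orders. -/
inductive HProof {A P : Type} : Fml A P → Prop where
  /-- modus ponens -/
  | mp {φ ψ : Fml A P} : HProof φ → HProof (.imp φ ψ) → HProof ψ
  /-- necessitation -/
  | nec {φ : Fml A P} (e : Trm A P) : HProof φ → HProof (.box e φ)
  /-- (PDL): all substitution-instances of PDL formulas valid on REL -/
  | pdl {VA VP : Type} (φ : PFml VA VP) (hval : PValidREL φ)
      (σt : VA → Trm A P) (σf : VP → Fml A P) : HProof (instF σt σf φ)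
  /-- (a): [eᵃ]φ ↔ [([e]F)?]φ -/
  | adomAx (e : Trm A P) (φ : Fml A P) :
      HProof (Fml.iff (.box (.adom e) φ) (.box (.test (.box e .fls)) φ))
  /-- (∩id-T) -/
  | capIdT (e : Trm A P) (φ : Fml A P) :
      HProof (Fml.iff (.box (.capId e) φ) (.box (.test (Fml.dia (.capId e) Fml.tru)) φ))
  /-- (∩id-;) -/
  | capIdComp (e f : Trm A P) (φ : Fml A P) :
      HProof (Fml.iff (.box (.capId (.comp e f)) φ) (.box (.comp (.capId e) (.capId f)) φ))
  /-- (∩id-+) -/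
  | capIdUnion (e f : Trm A P) (φ : Fml A P) :
      HProof (Fml.iff (.box (.capId (.union e f)) φ) (.box (.union (.capId e) (.capId f)) φ))
  /-- (∩id-⁺) -/
  | capIdPlus (e : Trm A P) (φ : Fml A P) :
      HProof (Fml.iff (.box (.capId (.plus e)) φ) (.box (.capId e) φ))
  /-- (∩id-a) -/
  | capIdAdom (e : Trm A P) (φ : Fml A P) :
      HProof (Fml.iff (.box (.capId (.adom e)) φ) (.box (.adom e) φ))
  /-- (∩id-∩id) -/
  | capIdCapId (e : Trm A P) (φ : Fml A P) :
      HProof (Fml.iff (.box (.capId (.capId e)) φ) (.box (.capId e) φ))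
  /-- (∩id-∩i̅d) -/
  | capIdCapNid (e : Trm A P) (φ : Fml A P) :
      HProof (Fml.iff (.box (.capId (.capNid e)) φ) Fml.tru)
  /-- (∩id-?) -/
  | capIdTest (ψ : Fml A P) (φ : Fml A P) :
      HProof (Fml.iff (.box (.capId (.test ψ)) φ) (.box (.test ψ) φ))
  /-- (∩id-+-∩i̅d): [e]φ ↔ [e^{∩id} + e^{∩i̅d}]φ -/
  | split (e : Trm A P) (φ : Fml A P) :
      HProof (Fml.iff (.box e φ) (.box (.union (.capId e) (.capNid e)) φ))
  /-- (∩i̅d-;) -/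
  | capNidComp (e f : Trm A P) (φ : Fml A P) :
      HProof (Fml.iff (.box (.capNid (.comp e f)) φ)
        (.box (.union (.union (.comp (.capNid e) (.capId f)) (.comp (.capId e) (.capNid f)))
          (.comp (.capNid e) (.capNid f))) φ))
  /-- (∩i̅d-+) -/
  | capNidUnion (e f : Trm A P) (φ : Fml A P) :
      HProof (Fml.iff (.box (.capNid (.union e f)) φ) (.box (.union (.capNid e) (.capNid f)) φ))
  /-- (∩i̅d-⁺) -/
  | capNidPlus (e : Trm A P) (φ : Fml A P) :
      HProof (Fml.iff (.box (.capNid (.plus e)) φ) (.box (.plus (.capNid e)) φ))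
  /-- (∩i̅d-a) -/
  | capNidAdom (e : Trm A P) (φ : Fml A P) :
      HProof (Fml.iff (.box (.capNid (.adom e)) φ) Fml.tru)
  /-- (∩i̅d-∩id) -/
  | capNidCapId (e : Trm A P) (φ : Fml A P) :
      HProof (Fml.iff (.box (.capNid (.capId e)) φ) Fml.tru)
  /-- (∩i̅d-∩i̅d) -/
  | capNidCapNid (e : Trm A P) (φ : Fml A P) :
      HProof (Fml.iff (.box (.capNid (.capNid e)) φ) (.box (.capNid e) φ))
  /-- (∩i̅d-?) -/
  | capNidTest (ψ : Fml A P) (φ : Fml A P) :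
      HProof (Fml.iff (.box (.capNid (.test ψ)) φ) Fml.tru)
  /-- (Löb-∩i̅d⁺) -/
  | loeb (e : Trm A P) (φ : Fml A P) :
      HProof (.imp (.box (.plus (.capNid e)) (.imp (.box (.plus (.capNid e)) φ) φ))
        (.box (.plus (.capNid e)) φ))
mutual
  /-- Formulas of identity-free PDL (PDL⁻). -/
  inductive MFml (A P : Type) : Type where
    | pv : P → MFml A P
    | imp : MFml A P → MFml A P → MFml A P
    | fls : MFml A P
    | box : MTrm A P → MFml A P → MFml A P
  /-- Terms of identity-free PDL (PDL⁻). -/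
  inductive MTrm (A P : Type) : Type where
    | tv : A → MTrm A P
    | comp : MTrm A P → MTrm A P → MTrm A P
    | union : MTrm A P → MTrm A P → MTrm A P
    | plus : MTrm A P → MTrm A P
    | testL : MFml A P → MTrm A P → MTrm A P
    | testR : MTrm A P → MFml A P → MTrm A P
end

namespace MFml
/-- ¬φ := φ → F -/
def neg {A P : Type} (φ : MFml A P) : MFml A P := .imp φ .fls
/-- T := ¬F -/
def tru {A P : Type} : MFml A P := neg .fls
/-- φ ∨ ψ := ¬φ → ψ -/
def or {A P : Type} (φ ψ : MFml A P) : MFml A P := .imp (neg φ) ψ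
/-- φ ∧ ψ := ¬(¬φ ∨ ¬ψ) -/
def and {A P : Type} (φ ψ : MFml A P) : MFml A P := neg (or (neg φ) (neg ψ))
/-- φ ↔ ψ := (φ → ψ) ∧ (ψ → φ) -/
def iff {A P : Type} (φ ψ : MFml A P) : MFml A P := and (.imp φ ψ) (.imp ψ φ)
/-- ⟨e⟩φ := ¬[e]¬φ -/
def dia {A P : Type} (e : MTrm A P) (φ : MFml A P) : MFml A P := neg (.box e (neg φ))
end MFml

mutual
  /-- Semantics of PDL⁻ formulas on a generalized structure. -/
  def msemF {A P W : Type} (S : GStruct A P W) : MFml A P → W → Prop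
    | .pv p, x => S.val p x
    | .imp φ ψ, x => msemF S φ x → msemF S ψ x
    | .fls, _ => False
    | .box e φ, x => ∀ y, msemT S e x y → msemF S φ y
  /-- Semantics of PDL⁻ terms on a generalized structure. -/
  def msemT {A P W : Type} (S : GStruct A P W) : MTrm A P → W → W → Prop
    | .tv a, x, y => S.rel a x y
    | .comp e f, x, z => ∃ y, msemT S e x y ∧ msemT S f y z
    | .union e f, x, y => msemT S e x y ∨ msemT S f x y
    | .plus e, x, y => Relation.TransGen (fun u v => msemT S e u v) x y
    | .testL ψ e, x, y => msemF S ψ x ∧ msemT S e x y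
    | .testR e ψ, x, y => msemT S e x y ∧ msemF S ψ y
end
/-- Propositional formulas over variables `V`. -/
inductive PropF (V : Type) : Type where
  | pv : V → PropF V
  | imp : PropF V → PropF V → PropF V
  | fls : PropF V

/-- Evaluation of a propositional formula under a valuation. -/
def PropF.eval {V : Type} (v : V → Prop) : PropF V → Prop
  | .pv p => v p
  | .imp a b => PropF.eval v a → PropF.eval v b
  | .fls => False

/-- Substitution instance of a propositional formula, substituting PDL⁻ formulas
for the propositional variables. -/
def PropF.inst {V A P : Type} (σ : V → MFml A P) : PropF V → MFml A P
  | .pv p => σ p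
  | .imp a b => .imp (PropF.inst σ a) (PropF.inst σ b)
  | .fls => .fls

/-- The Hilbert system `H⁻` for PDL⁻ on finite strict linear orders. -/
inductive MProof {A P : Type} : MFml A P → Prop where
  /-- modus ponens -/
  | mp {φ ψ : MFml A P} : MProof φ → MProof (.imp φ ψ) → MProof ψ
  /-- necessitation -/
  | nec {φ : MFml A P} (e : MTrm A P) : MProof φ → MProof (.box e φ)
  /-- (Prop): all substitution-instances of valid propositional formulas -/
  | prop {V : Type} (χ : PropF V) (hval : ∀ v, PropF.eval v χ) (σ : V → MFml A P) :
      MProof (PropF.inst σ χ)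
  /-- (;) -/
  | compAx (e f : MTrm A P) (φ : MFml A P) :
      MProof (MFml.iff (.box (.comp e f) φ) (.box e (.box f φ)))
  /-- (+) -/
  | unionAx (e f : MTrm A P) (φ : MFml A P) :
      MProof (MFml.iff (.box (.union e f) φ) (MFml.and (.box e φ) (.box f φ)))
  /-- (⁺) -/
  | plusAx (e : MTrm A P) (φ : MFml A P) :
      MProof (MFml.iff (.box (.plus e) φ) (MFml.and (.box e φ) (.box e (.box (.plus e) φ))))
  /-- (⁺-Ind) -/
  | plusInd (e : MTrm A P) (φ : MFml A P) :
      MProof (.imp (MFml.and (.box e φ) (.box (.plus e) (.imp φ (.box e φ)))) (.box (.plus e) φ))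
  /-- (?-L) -/
  | testLAx (ψ : MFml A P) (e : MTrm A P) (φ : MFml A P) :
      MProof (MFml.iff (.box (.testL ψ e) φ) (.imp ψ (.box e φ)))
  /-- (?-R) -/
  | testRAx (e : MTrm A P) (ψ φ : MFml A P) :
      MProof (MFml.iff (.box (.testR e ψ) φ) (.box e (.imp ψ φ)))
  /-- (K) -/
  | kAx (e : MTrm A P) (φ ψ : MFml A P) :
      MProof (.imp (.box e (.imp φ ψ)) (.imp (.box e φ) (.box e ψ)))
  /-- (Löb-⁺) -/
  | loeb (e : MTrm A P) (φ : MFml A P) :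
      MProof (.imp (.box (.plus e) (.imp (.box (.plus e) φ) φ)) (.box (.plus e) φ))
mutual
  /-- The substitution `σ₀` applied to a PDL⁻ formula over term variables `A'` and
  formula variables `P ⊕ P'`: each `p ∈ P` is fixed, each `p' ∈ P'` becomes
  `⟨π₁(p')^{∩id}⟩T`, and each `a' ∈ A'` becomes `π₂(a')^{∩i̅d}`. -/
  def sigF {A P A' P' : Type} (π₁ : P' ≃ A) (π₂ : A' ≃ A) :
      MFml A' (P ⊕ P') → Fml A P
    | .pv (Sum.inl p) => .pv p
    | .pv (Sum.inr p') => Fml.dia (.capId (.tv (π₁ p'))) Fml.tru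
    | .imp φ ψ => .imp (sigF π₁ π₂ φ) (sigF π₁ π₂ ψ)
    | .fls => .fls
    | .box e φ => .box (sigT π₁ π₂ e) (sigF π₁ π₂ φ)
  /-- The substitution `σ₀` applied to a PDL⁻ term. -/
  def sigT {A P A' P' : Type} (π₁ : P' ≃ A) (π₂ : A' ≃ A) :
      MTrm A' (P ⊕ P') → Trm A P
    | .tv a' => .capNid (.tv (π₂ a'))
    | .comp e f => .comp (sigT π₁ π₂ e) (sigT π₁ π₂ f)
    | .union e f => .union (sigT π₁ π₂ e) (sigT π₁ π₂ f)
    | .plus e => .plus (sigT π₁ π₂ e)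
    | .testL ψ e => .comp (.test (sigF π₁ π₂ ψ)) (sigT π₁ π₂ e)
    | .testR e ψ => .comp (sigT π₁ π₂ e) (.test (sigF π₁ π₂ ψ))
end

/-! ### Auxiliary machinery -/

set_option linter.unreachableTactic false
set_option linter.unusedTactic false
set_option linter.unnecessarySeqFocus false

namespace PFml
/-- ¬φ -/
def neg {VA VP : Type} (φ : PFml VA VP) : PFml VA VP := .imp φ .fls
/-- φ ∨ ψ -/
def orr {VA VP : Type} (φ ψ : PFml VA VP) : PFml VA VP := .imp (neg φ) ψ
/-- φ ∧ ψ -/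
def andd {VA VP : Type} (φ ψ : PFml VA VP) : PFml VA VP := neg (orr (neg φ) (neg ψ))
/-- φ ↔ ψ -/
def ifff {VA VP : Type} (φ ψ : PFml VA VP) : PFml VA VP := andd (.imp φ ψ) (.imp ψ φ)
end PFml

lemma psemF_and {VA VP W} (S : GStruct VA VP W) (a b : PFml VA VP) (x : W) :
    psemF S (PFml.andd a b) x ↔ (psemF S a x ∧ psemF S b x) := by
  simp [PFml.andd, PFml.orr, PFml.neg, psemF] <;> tauto

lemma psemF_iff {VA VP W} (S : GStruct VA VP W) (a b : PFml VA VP) (x : W) :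
    psemF S (PFml.ifff a b) x ↔ (psemF S a x ↔ psemF S b x) := by
  simp [PFml.ifff, psemF_and, psemF] <;> tauto

section HAux
variable {A P : Type}

lemma hp_schema (χ : PFml (Trm A P) (Fml A P)) (h : PValidREL χ) : HProof (instF id id χ) :=
  HProof.pdl χ h id id

lemma hpImpTrans {a b c : Fml A P} (h1 : HProof (.imp a b)) (h2 : HProof (.imp b c)) :
    HProof (.imp a c) := by
  have h := hp_schema (.imp (.imp (.pv a) (.pv b)) (.imp (.imp (.pv b) (.pv c))
      (.imp (.pv a) (.pv c)))) (by intro W S _ _ x; simp [psemF] <;> tauto)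
  simp only [instF, id] at h
  exact HProof.mp h2 (HProof.mp h1 h)

lemma hpTru : HProof (Fml.tru : Fml A P) := by
  have h := hp_schema (A := A) (P := P) (.imp .fls .fls) (by intro W S _ _ x; simp [psemF])
  simp only [instF] at h
  exact h

lemma hpIffMp {a b : Fml A P} (h : HProof (Fml.iff a b)) : HProof (.imp a b) := by
  have h2 := hp_schema (.imp (PFml.ifff (.pv a) (.pv b)) (.imp (.pv a) (.pv b)))
      (by intro W S _ _ x; simp [psemF, psemF_iff] <;> tauto)
  simp only [instF, PFml.ifff, PFml.andd, PFml.orr, PFml.neg, id] at h2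
  exact HProof.mp h h2

lemma hpIffMpr {a b : Fml A P} (h : HProof (Fml.iff a b)) : HProof (.imp b a) := by
  have h2 := hp_schema (.imp (PFml.ifff (.pv a) (.pv b)) (.imp (.pv b) (.pv a)))
      (by intro W S _ _ x; simp [psemF, psemF_iff] <;> tauto)
  simp only [instF, PFml.ifff, PFml.andd, PFml.orr, PFml.neg, id] at h2
  exact HProof.mp h h2

lemma hpIffIntro {a b : Fml A P} (h1 : HProof (.imp a b)) (h2 : HProof (.imp b a)) :
    HProof (Fml.iff a b) := by
  have h := hp_schema (.imp (.imp (.pv a) (.pv b)) (.imp (.imp (.pv b) (.pv a))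
      (PFml.ifff (.pv a) (.pv b))))
      (by intro W S _ _ x; simp [psemF, psemF_iff] <;> tauto)
  simp only [instF, PFml.ifff, PFml.andd, PFml.orr, PFml.neg, id] at h
  exact HProof.mp h2 (HProof.mp h1 h)

lemma hpMpIff {a b : Fml A P} (h : HProof (Fml.iff a b)) (ha : HProof a) : HProof b :=
  HProof.mp ha (hpIffMp h)

lemma hpMprIff {a b : Fml A P} (h : HProof (Fml.iff a b)) (hb : HProof b) : HProof a :=
  HProof.mp hb (hpIffMpr h)

lemma hpBoxK (e : Trm A P) (a b : Fml A P) :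
    HProof (.imp (.box e (.imp a b)) (.imp (.box e a) (.box e b))) := by
  have h := hp_schema (.imp (.box (.tv e) (.imp (.pv a) (.pv b)))
      (.imp (.box (.tv e) (.pv a)) (.box (.tv e) (.pv b))))
      (by intro W S _ _ x; simp [psemF, psemT]; intro h1 h2 y hy; exact h1 y hy (h2 y hy))
  simpa only [instF, instT, id] using h

lemma hpBoxMono {a b : Fml A P} (e : Trm A P) (h : HProof (.imp a b)) :
    HProof (.imp (.box e a) (.box e b)) :=
  HProof.mp (HProof.nec e h) (hpBoxK e a b)

lemma hpBoxIffCong {a b : Fml A P} (e : Trm A P) (h : HProof (Fml.iff a b)) :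
    HProof (Fml.iff (.box e a) (.box e b)) :=
  hpIffIntro (hpBoxMono e (hpIffMp h)) (hpBoxMono e (hpIffMpr h))

lemma hpCompIff (e f : Trm A P) (φ : Fml A P) :
    HProof (Fml.iff (.box (.comp e f) φ) (.box e (.box f φ))) := by
  have h := hp_schema (PFml.ifff (.box (.comp (.tv e) (.tv f)) (.pv φ))
      (.box (.tv e) (.box (.tv f) (.pv φ))))
      (by
        intro W S _ _ x
        simp only [psemF_iff]
        simp [psemF, psemT]
        constructor
        · intro h y hy z hz; exact h z y hy hz
        · intro h z y hy hz; exact h y hy z hz)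
  simp only [instF, instT, PFml.ifff, PFml.andd, PFml.orr, PFml.neg, id] at h
  exact h

lemma hpUnionIntro (e f : Trm A P) (φ : Fml A P) :
    HProof (.imp (.box e φ) (.imp (.box f φ) (.box (.union e f) φ))) := by
  have h := hp_schema (.imp (.box (.tv e) (.pv φ)) (.imp (.box (.tv f) (.pv φ))
      (.box (.union (.tv e) (.tv f)) (.pv φ))))
      (by
        intro W S _ _ x
        simp [psemF, psemT]
        intro h1 h2 y hy
        rcases hy with hy | hy
        · exact h1 y hy
        · exact h2 y hy)
  simpa only [instF, instT, id] using h

lemma hpUnionElimR (e f : Trm A P) (φ : Fml A P) :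
    HProof (.imp (.box (.union e f) φ) (.box f φ)) := by
  have h := hp_schema (.imp (.box (.union (.tv e) (.tv f)) (.pv φ)) (.box (.tv f) (.pv φ)))
      (by intro W S _ _ x; simp [psemF, psemT]; intro h1 y hy; exact h1 y (Or.inr hy))
  simpa only [instF, instT, id] using h

/-- E1: the `∩id` part of any `σ₀`-image term is provably empty. -/
lemma hpCapIdSig {A' P' : Type} (π₁ : P' ≃ A) (π₂ : A' ≃ A) (m : MTrm A' (P ⊕ P'))
    (φ : Fml A P) : HProof (.box (.capId (sigT π₁ π₂ m)) φ) :=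
  match m with
  | .tv a' => hpMprIff (HProof.capIdCapNid (.tv (π₂ a')) φ) hpTru
  | .comp e f =>
      hpMprIff (HProof.capIdComp _ _ φ) (hpMprIff (hpCompIff _ _ φ)
        (HProof.nec _ (hpCapIdSig π₁ π₂ f φ)))
  | .union e f =>
      hpMprIff (HProof.capIdUnion _ _ φ)
        (HProof.mp (hpCapIdSig π₁ π₂ f φ)
          (HProof.mp (hpCapIdSig π₁ π₂ e φ) (hpUnionIntro _ _ φ)))
  | .plus e => hpMprIff (HProof.capIdPlus _ φ) (hpCapIdSig π₁ π₂ e φ)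
  | .testL ψ e =>
      hpMprIff (HProof.capIdComp _ _ φ) (hpMprIff (hpCompIff _ _ φ)
        (HProof.nec _ (hpCapIdSig π₁ π₂ e φ)))
  | .testR e ψ =>
      hpMprIff (HProof.capIdComp _ _ φ) (hpMprIff (hpCompIff _ _ φ)
        (hpCapIdSig π₁ π₂ e _))
  termination_by sizeOf m

/-- E2: `[G⁺]χ ↔ [(G^{∩i̅d})⁺]χ` when `[G^{∩id}]` is provably trivial. -/
lemma hpPlusShift (G : Trm A P) (hId : ∀ χ : Fml A P, HProof (.box (.capId G) χ))
    (χ : Fml A P) :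
    HProof (Fml.iff (.box (.plus G) χ) (.box (.plus (.capNid G)) χ)) := by
  have fwd : HProof (.imp (.box (.plus G) χ) (.box (.plus (.capNid G)) χ)) := by
    refine hpImpTrans (hpImpTrans (hpIffMp (HProof.split (.plus G) χ))
      (hpUnionElimR _ _ χ)) (hpIffMp (HProof.capNidPlus G χ))
  have hγ : HProof (.box (.capId (.plus G)) χ) := hpMprIff (HProof.capIdPlus G χ) (hId χ)
  have bwd : HProof (.imp (.box (.plus (.capNid G)) χ) (.box (.plus G) χ)) := by
    refine hpImpTrans (hpImpTrans (hpIffMpr (HProof.capNidPlus G χ))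
      (HProof.mp hγ (hpUnionIntro _ _ χ))) (hpIffMpr (HProof.split (.plus G) χ))
  exact hpIffIntro fwd bwd

lemma hpIffImpCong {a b : Fml A P} (c : Fml A P) (h : HProof (Fml.iff a b)) :
    HProof (Fml.iff (.imp a c) (.imp b c)) := by
  have h2 := hp_schema (.imp (PFml.ifff (.pv a) (.pv b))
      (PFml.ifff (.imp (.pv a) (.pv c)) (.imp (.pv b) (.pv c))))
      (by intro W S _ _ x; simp [psemF, psemF_iff] <;> tauto)
  simp only [instF, PFml.ifff, PFml.andd, PFml.orr, PFml.neg, id] at h2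
  exact HProof.mp h h2

end HAux

/-- Embedding of propositional formulas, with `Fml` substitutions as atoms. -/
def embedP {V A P : Type} (σ : V → Fml A P) : PropF V → PFml (Trm A P) (Fml A P)
  | .pv p => .pv (σ p)
  | .imp a b => .imp (embedP σ a) (embedP σ b)
  | .fls => .fls

lemma psemF_embedP {V A P W : Type} (σ : V → Fml A P) (S : GStruct (Trm A P) (Fml A P) W)
    (x : W) (χ : PropF V) :
    psemF S (embedP σ χ) x ↔ PropF.eval (fun p => S.val (σ p) x) χ := by
  induction χ with
  | pv p => simp [embedP, psemF, PropF.eval]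
  | imp a b iha ihb => simp [embedP, psemF, PropF.eval, iha, ihb]
  | fls => simp [embedP, psemF, PropF.eval]

lemma instF_embedP {V A P A' P' : Type} (π₁ : P' ≃ A) (π₂ : A' ≃ A)
    (σ : V → MFml A' (P ⊕ P')) (χ : PropF V) :
    instF id id (embedP (fun p => sigF π₁ π₂ (σ p)) χ) = sigF π₁ π₂ (PropF.inst σ χ) := by
  induction χ with
  | pv p => rfl
  | imp a b iha ihb => simp [embedP, instF, PropF.inst, sigF, iha, ihb]
  | fls => rfl
section HAux2
variable {A P : Type}

lemma hpUnionAx (e f : Trm A P) (φ : Fml A P) :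
    HProof (Fml.iff (.box (.union e f) φ) (Fml.and (.box e φ) (.box f φ))) := by
  have h := hp_schema (PFml.ifff (.box (.union (.tv e) (.tv f)) (.pv φ))
      (PFml.andd (.box (.tv e) (.pv φ)) (.box (.tv f) (.pv φ))))
      (by
        intro W S _ _ x
        simp only [psemF_iff, psemF_and]
        simp [psemF, psemT]
        constructor
        · intro h
          exact ⟨fun y hy => h y (Or.inl hy), fun y hy => h y (Or.inr hy)⟩
        · rintro ⟨h1, h2⟩ y (hy | hy)
          · exact h1 y hy
          · exact h2 y hy)
  simp only [instF, instT, PFml.ifff, PFml.andd, PFml.orr, PFml.neg, id] at h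
  exact h

lemma hpPlusAx (e : Trm A P) (φ : Fml A P) :
    HProof (Fml.iff (.box (.plus e) φ)
      (Fml.and (.box e φ) (.box e (.box (.plus e) φ)))) := by
  have h := hp_schema (PFml.ifff (.box (.plus (.tv e)) (.pv φ))
      (PFml.andd (.box (.tv e) (.pv φ)) (.box (.tv e) (.box (.plus (.tv e)) (.pv φ)))))
      (by
        intro W S _ _ x
        simp only [psemF_iff, psemF_and]
        simp [psemF, psemT]
        constructor
        · intro h
          refine ⟨fun y hy => h y (Relation.TransGen.single hy),
            fun y hy z hz => h z (Relation.TransGen.head hy hz)⟩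
        · rintro ⟨h1, h2⟩ y hy
          rcases (Relation.TransGen.head'_iff).1 hy with ⟨b, hxb, hby⟩
          rcases (Relation.reflTransGen_iff_eq_or_transGen.1 hby) with rfl | htg
          · exact h1 _ hxb
          · exact h2 b hxb y htg)
  simp only [instF, instT, PFml.ifff, PFml.andd, PFml.orr, PFml.neg, id] at h
  exact h

lemma hpPlusInd (e : Trm A P) (φ : Fml A P) :
    HProof (.imp (Fml.and (.box e φ) (.box (.plus e) (.imp φ (.box e φ))))
      (.box (.plus e) φ)) := by
  have h := hp_schema (.imp (PFml.andd (.box (.tv e) (.pv φ))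
      (.box (.plus (.tv e)) (.imp (.pv φ) (.box (.tv e) (.pv φ)))))
      (.box (.plus (.tv e)) (.pv φ)))
      (by
        intro W S _ _ x hand
        rw [psemF_and] at hand
        obtain ⟨h1, h2⟩ := hand
        simp only [psemF, psemT] at h1 h2 ⊢
        intro y hy
        induction hy with
        | single hb => exact h1 _ hb
        | tail hwb hbc ih => exact h2 _ hwb ih _ hbc)
  simp only [instF, instT, PFml.ifff, PFml.andd, PFml.orr, PFml.neg, id] at h
  exact h

lemma hpTestL (ψ : Fml A P) (e : Trm A P) (φ : Fml A P) :
    HProof (Fml.iff (.box (.comp (.test ψ) e) φ) (.imp ψ (.box e φ))) := by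
  have h := hp_schema (PFml.ifff (.box (.comp (.test (.pv ψ)) (.tv e)) (.pv φ))
      (.imp (.pv ψ) (.box (.tv e) (.pv φ))))
      (by
        intro W S _ _ x
        simp only [psemF_iff]
        simp only [psemF, psemT]
        constructor
        · intro h hψ y hy; exact h y ⟨x, ⟨rfl, hψ⟩, hy⟩
        · rintro h y ⟨z, ⟨rfl, hψ⟩, hy⟩; exact h hψ y hy)
  simp only [instF, instT, PFml.ifff, PFml.andd, PFml.orr, PFml.neg, id] at h
  exact h

lemma hpTestR (e : Trm A P) (ψ φ : Fml A P) :
    HProof (Fml.iff (.box (.comp e (.test ψ)) φ) (.box e (.imp ψ φ))) := by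
  have h := hp_schema (PFml.ifff (.box (.comp (.tv e) (.test (.pv ψ))) (.pv φ))
      (.box (.tv e) (.imp (.pv ψ) (.pv φ))))
      (by
        intro W S _ _ x
        simp only [psemF_iff]
        simp only [psemF, psemT]
        constructor
        · intro h y hy hψ; exact h y ⟨y, hy, rfl, hψ⟩
        · rintro h y ⟨z, hz, rfl, hψ⟩; exact h z hz hψ)
  simp only [instF, instT, PFml.ifff, PFml.andd, PFml.orr, PFml.neg, id] at h
  exact h

end HAux2
theorem hproof_sig_of_mproof
    {A P A' P' : Type} (π₁ : P' ≃ A) (π₂ : A' ≃ A) (φ : MFml A' (P ⊕ P')) :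
    MProof φ → HProof (sigF π₁ π₂ φ) := by
  intro h
  induction h with
  | mp h1 h2 ih1 ih2 => exact HProof.mp ih1 ih2
  | nec e _ ih => exact HProof.nec (sigT π₁ π₂ e) ih
  | prop χ hval σ =>
      have h := hp_schema (embedP (fun p => sigF π₁ π₂ (σ p)) χ)
        (by intro W S _ _ x; rw [psemF_embedP]; exact hval _)
      rw [instF_embedP] at h
      exact h
  | compAx e f φ => exact hpCompIff (sigT π₁ π₂ e) (sigT π₁ π₂ f) (sigF π₁ π₂ φ)
  | unionAx e f φ => exact hpUnionAx (sigT π₁ π₂ e) (sigT π₁ π₂ f) (sigF π₁ π₂ φ)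
  | plusAx e φ => exact hpPlusAx (sigT π₁ π₂ e) (sigF π₁ π₂ φ)
  | plusInd e φ => exact hpPlusInd (sigT π₁ π₂ e) (sigF π₁ π₂ φ)
  | testLAx ψ e φ => exact hpTestL (sigF π₁ π₂ ψ) (sigT π₁ π₂ e) (sigF π₁ π₂ φ)
  | testRAx e ψ φ => exact hpTestR (sigT π₁ π₂ e) (sigF π₁ π₂ ψ) (sigF π₁ π₂ φ)
  | kAx e φ ψ => exact hpBoxK (sigT π₁ π₂ e) (sigF π₁ π₂ φ) (sigF π₁ π₂ ψ)
  | loeb e φ =>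
      have E2 : ∀ χ : Fml A P, HProof (Fml.iff (.box (.plus (sigT π₁ π₂ e)) χ)
          (.box (.plus (.capNid (sigT π₁ π₂ e))) χ)) :=
        fun χ => hpPlusShift (sigT π₁ π₂ e) (hpCapIdSig π₁ π₂ e) χ
      have a2 := E2 (sigF π₁ π₂ φ)
      have a3 := hpIffImpCong (sigF π₁ π₂ φ) a2
      have a1 := hpIffMp (E2 (.imp (.box (.plus (sigT π₁ π₂ e)) (sigF π₁ π₂ φ))
        (sigF π₁ π₂ φ)))
      have a4 := hpBoxMono (.plus (.capNid (sigT π₁ π₂ e))) (hpIffMp a3)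
      have a5 := HProof.loeb (sigT π₁ π₂ e) (sigF π₁ π₂ φ)
      have a6 := hpIffMpr a2
      exact hpImpTrans (hpImpTrans (hpImpTrans a1 a4) a5) a6
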